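/- Explicit K-Shapley value of carrier games: for every nonempty D ⊆ [M] with |D| ≤ K and every α ∈ ℝ, the K-Shapley value of the scaled carrier game u_{D,α} = α·u_D is φ_i^K(u_{D,α}) = α · C(M − |D|, K − |D|) / (|D| · C(M−1, K−1)) for every i ∈ D, and φ_i^K(u_{D,α}) = 0 for every i ∉ D. -/

import Mathlib

open Finset

/-- The `K`-Shapley value of player `i` in a `K`-restricted cooperative game `V` on `[M]`. -/
noncomputable def KShapley (M K : ℕ) (V : Finset (Fin M) → ℝ) (i : Fin M) : ℝ :=
  (1 / ((M - 1).choose (K - 1) : ℝ)) *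
    ∑ SK ∈ Finset.filter (fun SK => i ∈ SK)
        (Finset.powersetCard K (Finset.univ : Finset (Fin M))),
      ∑ S ∈ (SK.erase i).powerset,
        ((S.card.factorial * (K - S.card - 1).factorial : ℕ) : ℝ) / (K.factorial : ℝ) *
          (V (insert i S) - V S)

/-- The `K`-restricted carrier game associated with a coalition `D ⊆ [M]`:
`u_D(S) = 1` if `D ⊆ S` and `0` otherwise. -/
noncomputable def carrier (M : ℕ) (D : Finset (Fin M)) : Finset (Fin M) → ℝ :=
  fun S => if D ⊆ S then 1 else 0

/-- Explicit `K`-Shapley value of scaled carrier games: for nonempty `D` with `|D| ≤ K`,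
`φ_i^K(α·u_D) = α · C(M-|D|, K-|D|) / (|D| · C(M-1, K-1))` for `i ∈ D`, and `0` for `i ∉ D`. -/

lemma key_nat (e d : ℕ) (hd : 1 ≤ d) :
    d * ∑ t ∈ range (e + 1), e.choose t * ((t + d - 1).factorial * (e - t).factorial)
      = (e + d).factorial := by
  have h1 : ∀ t ∈ range (e + 1),
      e.choose t * ((t + d - 1).factorial * (e - t).factorial)
        = (t + (d - 1)).choose (d - 1) * ((d - 1).factorial * e.factorial) := by
    intro t ht
    have ht' : t ≤ e := Nat.lt_succ_iff.mp (mem_range.mp ht)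
    have h2 : t + d - 1 = t + (d - 1) := by omega
    have h3 : (t + (d-1)).choose (d-1) * (d-1).factorial * ((t + (d-1)) - (d-1)).factorial
        = (t + (d-1)).factorial := Nat.choose_mul_factorial_mul_factorial (by omega)
    have h4 : e.choose t * t.factorial * (e - t).factorial = e.factorial :=
      Nat.choose_mul_factorial_mul_factorial ht'
    have h5 : (t + (d-1)) - (d-1) = t := by omega
    rw [h5] at h3
    rw [h2]
    calc e.choose t * ((t + (d-1)).factorial * (e - t).factorial)
        = e.choose t * (((t + (d-1)).choose (d-1) * (d-1).factorial * t.factorial)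
            * (e-t).factorial) := by rw [h3]
      _ = (t + (d-1)).choose (d-1) * ((d-1).factorial
            * (e.choose t * t.factorial * (e-t).factorial)) := by ring
      _ = (t + (d-1)).choose (d-1) * ((d-1).factorial * e.factorial) := by rw [h4]
  rw [Finset.sum_congr rfl h1, ← Finset.sum_mul]
  have hh : ∑ t ∈ range (e + 1), (t + (d - 1)).choose (d - 1) = (e + d).choose d := by
    have key : ∑ m ∈ Icc (d-1) (e + (d-1)), m.choose (d-1) = (e + (d-1) + 1).choose (d-1+1) :=
      Nat.sum_Icc_choose _ _
    rw [← Finset.Ico_add_one_right_eq_Icc, Finset.sum_Ico_eq_sum_range] at key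
    have h6 : e + (d-1) + 1 - (d-1) = e + 1 := by omega
    have h7 : e + (d-1) + 1 = e + d := by omega
    have h8 : d - 1 + 1 = d := by omega
    rw [h6, h7, h8] at key
    rw [← key]
    exact Finset.sum_congr rfl fun t _ => by rw [Nat.add_comm t (d-1)]
  rw [hh]
  have hmain := Nat.choose_mul_factorial_mul_factorial (Nat.le_add_left d e)
  have h9 : e + d - d = e := by omega
  rw [h9] at hmain
  calc d * ((e + d).choose d * ((d-1).factorial * e.factorial))
      = (e + d).choose d * (d * (d-1).factorial) * e.factorial := by ring
    _ = (e + d).choose d * d.factorial * e.factorial := by rw [Nat.mul_factorial_pred (by omega : d ≠ 0)]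
    _ = (e + d).factorial := hmain

lemma key_real (e d : ℕ) (hd : 1 ≤ d) :
    ∑ t ∈ range (e + 1),
        (e.choose t : ℝ) * (((t + d - 1).factorial * (e - t).factorial : ℕ) : ℝ)
          / ((e + d).factorial : ℝ)
      = 1 / d := by
  have h := key_nat e d hd
  have hfac : ((e + d).factorial : ℝ) ≠ 0 := Nat.cast_ne_zero.mpr (e+d).factorial_ne_zero
  have hd' : (d : ℝ) ≠ 0 := Nat.cast_ne_zero.mpr (by omega)
  have h2 : (d : ℝ) * ∑ t ∈ range (e + 1),
      (e.choose t : ℝ) * (((t + d - 1).factorial * (e - t).factorial : ℕ) : ℝ)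
      = ((e + d).factorial : ℝ) := by exact_mod_cast h
  rw [← Finset.sum_div, div_eq_div_iff hfac hd', one_mul, ← h2]
  ring

theorem kshapley_carrier (M K : ℕ) (hM : 1 ≤ M) (hK1 : 1 ≤ K) (hKM : K ≤ M)
    (D : Finset (Fin M)) (hD : D.Nonempty) (hDK : D.card ≤ K) (α : ℝ) :
    (∀ i ∈ D, KShapley M K (fun S => α * carrier M D S) i
        = α * ((M - D.card).choose (K - D.card) : ℝ)
            / ((D.card : ℝ) * ((M - 1).choose (K - 1) : ℝ)))
    ∧ (∀ i ∉ D, KShapley M K (fun S => α * carrier M D S) i = 0) := by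
  constructor
  · intro i hi
    have hd1 : 1 ≤ D.card := Finset.card_pos.mpr hD
    set d := D.card with hd
    have inner : ∀ SK ∈ Finset.filter (fun SK => i ∈ SK)
        (Finset.powersetCard K (Finset.univ : Finset (Fin M))),
        (∑ S ∈ (SK.erase i).powerset,
          ((S.card.factorial * (K - S.card - 1).factorial : ℕ) : ℝ) / (K.factorial : ℝ) *
            ((fun S => α * carrier M D S) (insert i S) - (fun S => α * carrier M D S) S))
          = if D ⊆ SK then α * (1 / (d : ℝ)) else 0 := by
      intro SK hSK
      rw [Finset.mem_filter, Finset.mem_powersetCard] at hSK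
      obtain ⟨⟨_, hcard⟩, hiSK⟩ := hSK
      simp only []
      have step1 : ∀ S ∈ (SK.erase i).powerset,
          ((S.card.factorial * (K - S.card - 1).factorial : ℕ) : ℝ) / (K.factorial : ℝ) *
            (α * carrier M D (insert i S) - α * carrier M D S)
          = if D.erase i ⊆ S then
              ((S.card.factorial * (K - S.card - 1).factorial : ℕ) : ℝ) / (K.factorial : ℝ) * α
            else 0 := by
        intro S hS
        rw [Finset.mem_powerset] at hS
        have hiS : i ∉ S := fun h => (Finset.notMem_erase i SK) (hS h)
        have hc0 : carrier M D S = 0 := by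
          simp only [carrier, if_neg (fun h : D ⊆ S => hiS (h hi))]
        have hc1 : carrier M D (insert i S) = if D.erase i ⊆ S then 1 else 0 := by
          simp only [carrier, Finset.subset_insert_iff]
        rw [hc0, hc1]
        by_cases h : D.erase i ⊆ S <;> simp [h]
      rw [Finset.sum_congr rfl step1]
      by_cases hDSK : D ⊆ SK
      · rw [if_pos hDSK, ← Finset.sum_filter]
        have hAB : D.erase i ⊆ SK.erase i := Finset.erase_subset_erase i hDSK
        have hcardA : (D.erase i).card = d - 1 := by
          rw [Finset.card_erase_of_mem hi]
        have hcardB : (SK.erase i).card = K - 1 := by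
          rw [Finset.card_erase_of_mem hiSK, hcard]
        have hcardE : ((SK.erase i) \ (D.erase i)).card = K - d := by
          rw [Finset.card_sdiff_of_subset hAB, hcardA, hcardB]; omega
        have hreindex :
            ∑ S ∈ Finset.filter (fun S => D.erase i ⊆ S) (SK.erase i).powerset,
              ((S.card.factorial * (K - S.card - 1).factorial : ℕ) : ℝ) / (K.factorial : ℝ) * α
            = ∑ T ∈ ((SK.erase i) \ (D.erase i)).powerset,
              (((T.card + (d-1)).factorial * (K - (T.card + (d-1)) - 1).factorial : ℕ) : ℝ)
                / (K.factorial : ℝ) * α := by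
          refine Finset.sum_nbij' (fun S => S \ (D.erase i)) (fun T => T ∪ (D.erase i))
            ?_ ?_ ?_ ?_ ?_
          · intro S hS
            rw [Finset.mem_filter, Finset.mem_powerset] at hS
            rw [Finset.mem_powerset]
            exact Finset.sdiff_subset_sdiff hS.1 Finset.Subset.rfl
          · intro T hT
            rw [Finset.mem_powerset] at hT
            rw [Finset.mem_filter, Finset.mem_powerset]
            exact ⟨Finset.union_subset (hT.trans Finset.sdiff_subset) hAB,
              Finset.subset_union_right⟩
          · intro S hS
            rw [Finset.mem_filter] at hS
            exact Finset.sdiff_union_of_subset hS.2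
          · intro T hT
            rw [Finset.mem_powerset] at hT
            have hdisj : Disjoint T (D.erase i) :=
              Finset.disjoint_left.mpr fun x hx => (Finset.mem_sdiff.mp (hT hx)).2
            show (T ∪ D.erase i) \ D.erase i = T
            rw [Finset.union_sdiff_distrib, Finset.sdiff_self, Finset.union_empty,
              Finset.sdiff_eq_self_of_disjoint hdisj]
          · intro S hS
            rw [Finset.mem_filter, Finset.mem_powerset] at hS
            have hA_S : (D.erase i).card ≤ S.card := Finset.card_le_card hS.2
            have hcardS : (S \ (D.erase i)).card + (d - 1) = S.card := by
              rw [Finset.card_sdiff_of_subset hS.2, hcardA]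
              omega
            rw [hcardS]
        rw [hreindex, Finset.sum_powerset, hcardE]
        have hpc : ∀ j ∈ range (K - d + 1),
            (∑ T ∈ Finset.powersetCard j ((SK.erase i) \ (D.erase i)),
              (((T.card + (d-1)).factorial * (K - (T.card + (d-1)) - 1).factorial : ℕ) : ℝ)
                / (K.factorial : ℝ) * α)
            = ((K-d).choose j : ℝ) *
                ((((j + d - 1).factorial * (K - d - j).factorial : ℕ) : ℝ)
                  / (K.factorial : ℝ)) * α := by
          intro j hj
          have hj' : j ≤ K - d := by
            have := mem_range.mp hj; omega
          have hcd : ∀ T ∈ Finset.powersetCard j ((SK.erase i) \ (D.erase i)), T.card = j :=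
            fun T hT => (Finset.mem_powersetCard.mp hT).2
          rw [Finset.sum_congr rfl (fun T hT => by rw [hcd T hT])]
          rw [Finset.sum_const, Finset.card_powersetCard, hcardE, nsmul_eq_mul]
          have e1 : j + (d-1) = j + d - 1 := by omega
          have e2 : K - (j + d - 1) - 1 = K - d - j := by omega
          rw [e1, e2]; ring
        rw [Finset.sum_congr rfl hpc]
        have hK : K - d + d = K := by omega
        have hkr := key_real (K - d) d hd1
        rw [hK] at hkr
        have hrw : ∀ j ∈ range (K - d + 1),
            ((K-d).choose j : ℝ) *
                ((((j + d - 1).factorial * (K - d - j).factorial : ℕ) : ℝ)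
                  / (K.factorial : ℝ)) * α
            = ((K-d).choose j : ℝ) * (((j + d - 1).factorial * (K - d - j).factorial : ℕ) : ℝ)
                  / (K.factorial : ℝ) * α := by
          intro j _; ring
        rw [Finset.sum_congr rfl hrw, ← Finset.sum_mul, hkr]
        ring
      · rw [if_neg hDSK]
        apply Finset.sum_eq_zero
        intro S hS
        rw [Finset.mem_powerset] at hS
        rw [if_neg]
        intro h
        apply hDSK
        intro x hx
        by_cases hxi : x = i
        · exact hxi ▸ hiSK
        · exact (Finset.erase_subset i SK) (hS (h (Finset.mem_erase.mpr ⟨hxi, hx⟩)))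
    unfold KShapley
    rw [Finset.sum_congr rfl inner, Finset.sum_filter]
    have hstep : ∀ SK ∈ Finset.powersetCard K (Finset.univ : Finset (Fin M)),
        (if i ∈ SK then (if D ⊆ SK then α * (1 / (d : ℝ)) else 0) else 0)
        = if D ⊆ SK then α * (1 / (d : ℝ)) else 0 := by
      intro SK _
      by_cases h : D ⊆ SK
      · simp [h, h hi]
      · by_cases h2 : i ∈ SK <;> simp [h, h2]
    rw [Finset.sum_congr rfl hstep, ← Finset.sum_filter, Finset.sum_const]
    have hcount : (Finset.filter (fun SK => D ⊆ SK)
        (Finset.powersetCard K (Finset.univ : Finset (Fin M)))).card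
        = (M - d).choose (K - d) := by
      have hcu : ((Finset.univ : Finset (Fin M)) \ D).card = M - d := by
        rw [Finset.card_sdiff_of_subset (Finset.subset_univ D), Finset.card_univ, Fintype.card_fin]
      rw [← hcu, ← Finset.card_powersetCard]
      apply Finset.card_nbij' (fun SK => SK \ D) (fun T => T ∪ D)
      · intro SK hSK
        rw [Finset.mem_coe, Finset.mem_filter, Finset.mem_powersetCard] at hSK
        rw [Finset.mem_coe, Finset.mem_powersetCard]
        refine ⟨Finset.sdiff_subset_sdiff hSK.1.1 Finset.Subset.rfl, ?_⟩
        rw [Finset.card_sdiff_of_subset hSK.2, hSK.1.2]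
      · intro T hT
        rw [Finset.mem_coe, Finset.mem_powersetCard] at hT
        rw [Finset.mem_coe, Finset.mem_filter, Finset.mem_powersetCard]
        have hdisj : Disjoint T D :=
          Finset.disjoint_left.mpr fun x hx => (Finset.mem_sdiff.mp (hT.1 hx)).2
        refine ⟨⟨Finset.subset_univ _, ?_⟩, Finset.subset_union_right⟩
        rw [Finset.card_union_of_disjoint hdisj, hT.2]
        omega
      · intro SK hSK
        rw [Finset.mem_coe, Finset.mem_filter] at hSK
        exact Finset.sdiff_union_of_subset hSK.2
      · intro T hT
        rw [Finset.mem_coe, Finset.mem_powersetCard] at hT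
        have hdisj : Disjoint T D :=
          Finset.disjoint_left.mpr fun x hx => (Finset.mem_sdiff.mp (hT.1 hx)).2
        beta_reduce
        rw [Finset.union_sdiff_distrib, Finset.sdiff_self, Finset.union_empty,
          Finset.sdiff_eq_self_of_disjoint hdisj]
    rw [hcount, nsmul_eq_mul]
    have hC : (((M-1).choose (K-1) : ℕ) : ℝ) ≠ 0 :=
      Nat.cast_ne_zero.mpr (Nat.choose_pos (by omega)).ne'
    have hd' : ((d : ℕ) : ℝ) ≠ 0 := Nat.cast_ne_zero.mpr (by omega)
    field_simp
  · intro i hi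
    unfold KShapley
    rw [mul_eq_zero]
    right
    apply Finset.sum_eq_zero
    intro SK _
    apply Finset.sum_eq_zero
    intro S _
    have hcc : carrier M D (insert i S) = carrier M D S := by
      simp only [carrier, Finset.subset_insert_iff_of_notMem hi]
    simp [hcc]
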